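/- For s > 2, in long range percolation on ℤ with edge probabilities |i-j|^{-s}, almost surely there exist infinitely many cut-points in ℤ (both to the left and to the right of any given vertex). -/

import Mathlib

open MeasureTheory ProbabilityTheory MeasurableSpace Filter ENNReal

namespace InfCutAux

variable {Ω : Type*}

/-- The set of configurations for which `k` is a cut-point. -/
def cutSet (E : ℤ × ℤ → Set Ω) (k : ℤ) : Set Ω :=
  ⋂ (p : ℤ × ℤ) (_ : p.1 < k ∧ k < p.2), (E p)ᶜ

lemma mem_cutSet {E : ℤ × ℤ → Set Ω} {k : ℤ} {ω : Ω} :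
    ω ∈ cutSet E k ↔ ∀ i j : ℤ, i < k → k < j → ω ∉ E (i, j) := by
  simp only [cutSet, Set.mem_iInter, Set.mem_compl_iff]
  exact ⟨fun h i j hi hj => h (i, j) ⟨hi, hj⟩, fun h p hp => h p.1 p.2 hp.1 hp.2⟩

lemma measurableSet_cutSet {m : MeasurableSpace Ω} {E : ℤ × ℤ → Set Ω} {k : ℤ}
    (h : ∀ p : ℤ × ℤ, p.1 < k ∧ k < p.2 → MeasurableSet[m] (E p)) :
    MeasurableSet[m] (cutSet E k) :=
  MeasurableSet.iInter fun p => MeasurableSet.iInter fun hp => (h p hp).compl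

variable [MeasurableSpace Ω] {μ : Measure Ω}

/-- Uniform positive lower bound on the probability that `k` is a cut-point. -/
lemma exists_cut_lb (s : ℝ) (hs : 2 < s) (μ : Measure Ω) [IsProbabilityMeasure μ]
    (E : ℤ × ℤ → Set Ω) (hmeas : ∀ p, MeasurableSet (E p))
    (hindep : iIndepSet E μ)
    (hprob : ∀ p : ℤ × ℤ, p.1 < p.2 →
      μ (E p) = ENNReal.ofReal (|(p.1 : ℝ) - (p.2 : ℝ)| ^ (-s))) :
    ∃ c : ℝ≥0∞, c ≠ 0 ∧ ∀ k : ℤ, c ≤ μ (cutSet E k) := by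
  have hs0 : (0:ℝ) < s := by linarith
  -- one-dimensional summability
  have hsum1 : Summable (fun n : ℕ => ((n:ℝ)+1) ^ (-(s/2))) := by
    have h0 : Summable (fun n : ℕ => (n:ℝ) ^ (-(s/2))) :=
      (Real.summable_nat_rpow (p := -(s/2))).2 (by linarith)
    have h1 := (summable_nat_add_iff 1).2 h0
    exact h1.congr (fun n => by push_cast; ring_nf)
  set h1 : ℕ → ℝ≥0∞ := fun a => ENNReal.ofReal (((a:ℝ)+1) ^ (-(s/2))) with hh1def
  have hh1 : ∑' a, h1 a ≠ ⊤ := by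
    rw [hh1def, ← ENNReal.ofReal_tsum_of_nonneg (fun n => Real.rpow_nonneg (by positivity) _) hsum1]
    exact ENNReal.ofReal_ne_top
  set h : ℕ × ℕ → ℝ≥0∞ := fun ab => ENNReal.ofReal (((ab.1:ℝ)+(ab.2:ℝ)+2) ^ (-s)) with hhdef
  have hb : ∀ ab : ℕ × ℕ, h ab ≤ h1 ab.1 * h1 ab.2 := by
    rintro ⟨a, b⟩
    rw [hhdef, hh1def]
    simp only
    rw [← ENNReal.ofReal_mul (Real.rpow_nonneg (by positivity) _)]
    apply ENNReal.ofReal_le_ofReal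
    have hx : (0:ℝ) < (a:ℝ)+1 := by positivity
    have hy : (0:ℝ) < (b:ℝ)+1 := by positivity
    have ht : (0:ℝ) < (a:ℝ)+(b:ℝ)+2 := by positivity
    rw [Real.rpow_neg hx.le, Real.rpow_neg hy.le, Real.rpow_neg ht.le, ← mul_inv]
    apply inv_anti₀ (by positivity)
    calc ((a:ℝ)+1) ^ (s/2) * ((b:ℝ)+1) ^ (s/2)
        ≤ ((a:ℝ)+(b:ℝ)+2) ^ (s/2) * ((a:ℝ)+(b:ℝ)+2) ^ (s/2) := by
          apply mul_le_mul (Real.rpow_le_rpow hx.le (by linarith) (by linarith))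
            (Real.rpow_le_rpow hy.le (by linarith) (by linarith))
            (Real.rpow_nonneg hy.le _) (Real.rpow_nonneg ht.le _)
      _ = ((a:ℝ)+(b:ℝ)+2) ^ s := by
          rw [← Real.rpow_add ht]; norm_num
  have hfin : ∑' ab : ℕ × ℕ, h ab ≠ ⊤ := by
    refine ne_top_of_le_ne_top ?_ (ENNReal.tsum_le_tsum hb)
    rw [ENNReal.tsum_prod']
    simp_rw [ENNReal.tsum_mul_left]
    rw [ENNReal.tsum_mul_right]
    exact ENNReal.mul_ne_top hh1 hh1
  obtain ⟨u, hu⟩ :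
      ∃ u : Finset (ℕ × ℕ), ∑' p : {p : ℕ × ℕ // p ∉ u}, h p < 1/2 :=
    ((tendsto_order.1 (ENNReal.tendsto_tsum_compl_atTop_zero hfin)).2 (1/2)
      (by norm_num)).exists
  set R : ℕ := u.sup (fun p => p.1 + p.2) with hRdef
  have hRu : ∀ ab : ℕ × ℕ, R < ab.1 + ab.2 → ab ∉ u := by
    intro ab hab hin
    exact absurd (Finset.le_sup (f := fun p : ℕ × ℕ => p.1 + p.2) hin) (not_le.2 hab)
  set S : ℤ → Finset (ℤ × ℤ) := fun k =>
    (Finset.range (R+1) ×ˢ Finset.range (R+1)).image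
      (fun ab : ℕ × ℕ => ((k - 1 - ab.1 : ℤ), (k + 1 + ab.2 : ℤ))) with hSdef
  set q : ℝ≥0∞ := 1 - ENNReal.ofReal ((2:ℝ) ^ (-s)) with hqdef
  have h2lt1 : ENNReal.ofReal ((2:ℝ) ^ (-s)) < 1 := by
    rw [← ENNReal.ofReal_one]
    exact ENNReal.ofReal_lt_ofReal_iff_of_nonneg (Real.rpow_nonneg (by norm_num) _)
      |>.2 (Real.rpow_lt_one_of_one_lt_of_neg one_lt_two (by linarith))
  have hq0 : q ≠ 0 := by
    rw [hqdef]
    exact (tsub_pos_of_lt h2lt1).ne'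
  have hq1 : q ≤ 1 := by rw [hqdef]; exact tsub_le_self
  refine ⟨q ^ ((R+1)*(R+1)) * (1/2), ?_, ?_⟩
  · exact mul_ne_zero (pow_ne_zero _ hq0) (by norm_num)
  intro k
  have hiIndep : iIndep (fun p => generateFrom {E p}) μ := (iIndepSet_iff_iIndep E μ).1 hindep
  have h_le : ∀ p : ℤ × ℤ, generateFrom {E p} ≤ ‹MeasurableSpace Ω› := fun p =>
    generateFrom_le (fun t ht => by rw [Set.mem_singleton_iff] at ht; subst ht; exact hmeas p)
  have hgen : ∀ p : ℤ × ℤ, MeasurableSet[generateFrom {E p}] (E p) := fun p =>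
    measurableSet_generateFrom rfl
  -- probabilities of specific edges
  have hEp : ∀ a b : ℕ, μ (E (k-1-a, k+1+b)) = ENNReal.ofReal (((a:ℝ)+(b:ℝ)+2) ^ (-s)) := by
    intro a b
    rw [hprob _ (by simp only; omega)]
    congr 2
    simp only
    push_cast
    rw [show ((k:ℝ)-1-(a:ℝ)) - ((k:ℝ)+1+(b:ℝ)) = -((a:ℝ)+(b:ℝ)+2) by ring, abs_neg,
      abs_of_nonneg (by positivity)]
  have hEple : ∀ a b : ℕ, μ (E (k-1-a, k+1+b)) ≤ ENNReal.ofReal ((2:ℝ) ^ (-s)) := by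
    intro a b
    rw [hEp a b]
    apply ENNReal.ofReal_le_ofReal
    have ht : (0:ℝ) < (a:ℝ)+(b:ℝ)+2 := by positivity
    rw [Real.rpow_neg ht.le, Real.rpow_neg (by norm_num : (0:ℝ) ≤ 2)]
    exact inv_anti₀ (by positivity)
      (Real.rpow_le_rpow (by norm_num) (by linarith [ht]; ) (by linarith))
  set F : Set Ω := ⋂ (p : ℤ × ℤ) (_ : p ∈ S k), (E p)ᶜ with hFdef
  set G : Set Ω := ⋂ (p : ℤ × ℤ) (_ : (p.1 < k ∧ k < p.2) ∧ p ∉ S k), (E p)ᶜ with hGdef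
  have hFG : F ∩ G ⊆ cutSet E k := by
    rintro ω ⟨hωF, hωG⟩
    rw [mem_cutSet]
    intro i j hi hj
    by_cases hmem : ((i,j) : ℤ × ℤ) ∈ S k
    · have := Set.mem_iInter.1 hωF (i,j)
      exact Set.mem_iInter.1 this hmem
    · have := Set.mem_iInter.1 hωG (i,j)
      exact Set.mem_iInter.1 this ⟨⟨hi, hj⟩, hmem⟩
  -- independence of the two parts
  have hsplit := indep_biSup_compl h_le hiIndep (↑(S k) : Set (ℤ × ℤ))
  rw [Indep_iff] at hsplit
  have hF_meas : MeasurableSet[⨆ p ∈ (↑(S k) : Set (ℤ × ℤ)), generateFrom {E p}] F :=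
    MeasurableSet.iInter fun p => MeasurableSet.iInter fun hp =>
      le_iSup₂ (f := fun (p : ℤ × ℤ) (_ : p ∈ (↑(S k) : Set (ℤ × ℤ))) => generateFrom {E p})
        p (Finset.mem_coe.2 hp) _ ((hgen p).compl)
  have hG_meas : MeasurableSet[⨆ p ∈ (↑(S k) : Set (ℤ × ℤ))ᶜ, generateFrom {E p}] G :=
    MeasurableSet.iInter fun p => MeasurableSet.iInter fun hp =>
      le_iSup₂ (f := fun (p : ℤ × ℤ) (_ : p ∈ (↑(S k) : Set (ℤ × ℤ))ᶜ) => generateFrom {E p})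
        p (by simpa using hp.2) _ ((hgen p).compl)
  have hmul : μ (F ∩ G) = μ F * μ G := hsplit F G hF_meas hG_meas
  -- lower bound for F
  have hFprod : μ F = ∏ p ∈ S k, μ ((E p)ᶜ) := by
    rw [hFdef]
    exact hiIndep.meas_biInter (fun p _ => (hgen p).compl)
  have hmemS : ∀ p ∈ S k, q ≤ μ ((E p)ᶜ) := by
    intro p hp
    rw [hSdef] at hp
    simp only [Finset.mem_image, Finset.mem_product, Finset.mem_range] at hp
    obtain ⟨⟨a, b⟩, _, rfl⟩ := hp
    rw [prob_compl_eq_one_sub (hmeas _), hqdef]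
    exact tsub_le_tsub_left (hEple a b) 1
  have hFlb : q ^ ((R+1)*(R+1)) ≤ μ F := by
    calc q ^ ((R+1)*(R+1)) ≤ q ^ (S k).card := by
          apply pow_le_pow_of_le_one zero_le hq1
          calc (S k).card ≤ ((Finset.range (R+1)) ×ˢ (Finset.range (R+1))).card :=
                Finset.card_image_le
            _ = (R+1)*(R+1) := by simp [Finset.card_product]
      _ = ∏ _p ∈ S k, q := by rw [Finset.prod_const]
      _ ≤ ∏ p ∈ S k, μ ((E p)ᶜ) := Finset.prod_le_prod' hmemS
      _ = μ F := hFprod.symm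
  -- lower bound for G
  have hGmeas0 : MeasurableSet G :=
    MeasurableSet.iInter fun p => MeasurableSet.iInter fun _ => (hmeas p).compl
  set A : ℕ × ℕ → Set Ω := fun ab =>
    if R < ab.1 + ab.2 then E ((k - 1 - ab.1 : ℤ), (k + 1 + ab.2 : ℤ)) else ∅ with hAdef
  have hGc : Gᶜ ⊆ ⋃ ab : ℕ × ℕ, A ab := by
    intro ω hω
    rw [hGdef] at hω
    simp only [Set.compl_iInter, Set.mem_iUnion, Set.mem_compl_iff, not_not] at hω
    obtain ⟨p, ⟨⟨hp1, hp2⟩, hpS⟩, hωp⟩ := hω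
    set a : ℕ := (k - 1 - p.1).toNat with hadef
    set b : ℕ := (p.2 - (k+1)).toNat with hbdef
    have hpa : (a:ℤ) = k - 1 - p.1 := Int.toNat_of_nonneg (by omega)
    have hpb : (b:ℤ) = p.2 - (k+1) := Int.toNat_of_nonneg (by omega)
    have hpeq : p = ((k - 1 - a : ℤ), (k + 1 + b : ℤ)) := by
      apply Prod.ext <;> simp <;> omega
    have hRab : R < a + b := by
      by_contra hcon
      push_neg at hcon
      apply hpS
      rw [hSdef]
      apply Finset.mem_image.2
      exact ⟨(a, b), by simp only [Finset.mem_product, Finset.mem_range]; omega, hpeq.symm⟩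
    refine Set.mem_iUnion.2 ⟨(a, b), ?_⟩
    rw [hAdef]
    simp only [if_pos hRab]
    rw [← hpeq]
    exact hωp
  have hGclb : μ Gᶜ ≤ 1/2 := by
    calc μ Gᶜ ≤ μ (⋃ ab : ℕ × ℕ, A ab) := measure_mono hGc
      _ ≤ ∑' ab : ℕ × ℕ, μ (A ab) := measure_iUnion_le _
      _ ≤ ∑' ab : ℕ × ℕ, (if R < ab.1 + ab.2 then h ab else 0) := by
          apply ENNReal.tsum_le_tsum
          rintro ⟨a, b⟩
          rw [hAdef]
          by_cases hcase : R < a + b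
          · simp only [if_pos hcase]
            rw [hEp a b, hhdef]
          · simp [if_neg hcase]
      _ ≤ ∑' p : {p : ℕ × ℕ // p ∉ u}, h p := by
          rw [← tsum_subtype_eq_of_support_subset
            (s := {p : ℕ × ℕ | p ∉ u}) ?_]
          · apply ENNReal.tsum_le_tsum
            rintro ⟨⟨a, b⟩, _⟩
            by_cases hcase : R < a + b
            · simp [if_pos hcase]
            · simp [if_neg hcase]
          · intro ab hab
            have : R < ab.1 + ab.2 := by
              by_contra hcon
              simp [if_neg hcon] at hab
            exact hRu ab this
      _ ≤ 1/2 := hu.le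
  have hGlb : (1:ℝ≥0∞)/2 ≤ μ G := by
    have h1 : μ G = 1 - μ Gᶜ := by
      rw [← prob_compl_eq_one_sub hGmeas0.compl, compl_compl]
    rw [h1]
    calc (1:ℝ≥0∞)/2 = 1 - 1/2 := by
          rw [show (1:ℝ≥0∞) - 1/2 = 1/2 from by
            rw [ENNReal.sub_half one_ne_top]]
      _ ≤ 1 - μ Gᶜ := tsub_le_tsub_left hGclb 1
  calc q ^ ((R+1)*(R+1)) * (1/2) ≤ μ F * μ G := mul_le_mul' hFlb hGlb
    _ = μ (F ∩ G) := hmul.symm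
    _ ≤ μ (cutSet E k) := measure_mono hFG

end InfCutAux

open InfCutAux

/-- for `s > 2`, long range percolation on ℤ almost surely has
infinitely many cut-points, both to the left and to the right of any given vertex. -/
theorem infinitely_many_cutpoints (s : ℝ) (hs : 2 < s)
    {Ω : Type*} [MeasurableSpace Ω] (μ : Measure Ω) [IsProbabilityMeasure μ]
    (E : ℤ × ℤ → Set Ω) (hmeas : ∀ p, MeasurableSet (E p))
    (hindep : iIndepSet E μ)
    (hprob : ∀ p : ℤ × ℤ, p.1 < p.2 →
      μ (E p) = ENNReal.ofReal (|(p.1 : ℝ) - (p.2 : ℝ)| ^ (-s))) :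
    ∀ᵐ ω ∂μ, ∀ m : ℤ,
      (∃ k : ℤ, m < k ∧ ∀ i j : ℤ, i < k → k < j → ω ∉ E (i, j)) ∧
      (∃ k : ℤ, k < m ∧ ∀ i j : ℤ, i < k → k < j → ω ∉ E (i, j)) := by
  obtain ⟨c, hc0, hc⟩ := exists_cut_lb s hs μ E hmeas hindep hprob
  have hiIndep : iIndep (fun p : ℤ × ℤ => generateFrom {E p}) μ :=
    (iIndepSet_iff_iIndep E μ).1 hindep
  set e : ℕ ≃ ℤ × ℤ := (Denumerable.eqv (ℤ × ℤ)).symm with hedef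
  set 𝔖 : ℕ → MeasurableSpace Ω := fun n => generateFrom {E (e n)} with h𝔖
  have h_le : ∀ n, 𝔖 n ≤ ‹MeasurableSpace Ω› := fun n =>
    generateFrom_le (fun t ht => by rw [Set.mem_singleton_iff] at ht; subst ht; exact hmeas _)
  have h_indep : iIndep 𝔖 μ := by
    rw [iIndep_iff]
    intro S f hf
    have hmeas' : ∀ p : ℤ × ℤ, p ∈ S.image e →
        MeasurableSet[generateFrom {E p}] (f (e.symm p)) := by
      intro p hp
      obtain ⟨n, hn, rfl⟩ := Finset.mem_image.1 hp
      rw [Equiv.symm_apply_apply]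
      exact hf n hn
    have hprod := hiIndep.meas_biInter (S := S.image e) (s := fun p => f (e.symm p)) hmeas'
    have hset : ⋂ p ∈ S.image e, f (e.symm p) = ⋂ n ∈ S, f n := by
      ext ω
      simp only [Set.mem_iInter, Finset.mem_image]
      constructor
      · intro hh n hn
        have := hh (e n) ⟨n, hn, rfl⟩
        simpa using this
      · rintro hh p ⟨n, hn, rfl⟩
        simpa using hh n hn
    have hprodeq : ∏ p ∈ S.image e, μ (f (e.symm p)) = ∏ n ∈ S, μ (f n) := by
      rw [Finset.prod_image (fun n _ m _ hnm => e.injective hnm)]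
      simp
    rw [hset, hprodeq] at hprod
    exact hprod
  set Tr : Set Ω := ⋂ (m : ℤ), ⋃ (k : ℤ) (_ : m < k), cutSet E k with hTrdef
  set Tl : Set Ω := ⋂ (m : ℤ), ⋃ (k : ℤ) (_ : k < m), cutSet E k with hTldef
  -- tail measurability
  have hEmem : ∀ p : ℤ × ℤ, MeasurableSet[𝔖 (e.symm p)] (E p) := by
    intro p
    rw [h𝔖]
    show MeasurableSet[generateFrom {E (e (e.symm p))}] (E p)
    rw [e.apply_symm_apply]
    exact measurableSet_generateFrom rfl
  have hBbound : ∀ n : ℕ, ∃ B : ℤ, 0 ≤ B ∧ ∀ m : ℕ, m < n →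
      |(e m).1| ≤ B ∧ |(e m).2| ≤ B := by
    intro n
    refine ⟨∑ m ∈ Finset.range n, (|(e m).1| + |(e m).2|), ?_, ?_⟩
    · exact Finset.sum_nonneg fun m _ => by positivity
    · intro m hm
      have hle : |(e m).1| + |(e m).2| ≤ ∑ m ∈ Finset.range n, (|(e m).1| + |(e m).2|) :=
        Finset.single_le_sum (f := fun m => |(e m).1| + |(e m).2|)
          (fun i _ => by positivity) (Finset.mem_range.2 hm)
      constructor
      · have := abs_nonneg (e m).2; omega
      · have := abs_nonneg (e m).1; omega
  have htail_r : MeasurableSet[limsup 𝔖 atTop] Tr := by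
    rw [limsup_eq_iInf_iSup_of_nat, measurableSet_iInf]
    intro n
    obtain ⟨B, hB0, hBm⟩ := hBbound n
    have hTr_eq : Tr = ⋂ (m : ℤ), ⋃ (k : ℤ) (_ : max m B < k), cutSet E k := by
      rw [hTrdef]
      ext ω
      simp only [Set.mem_iInter, Set.mem_iUnion]
      constructor
      · intro hh m
        obtain ⟨k, hk, hkc⟩ := hh (max m B)
        exact ⟨k, hk, hkc⟩
      · intro hh m
        obtain ⟨k, hk, hkc⟩ := hh m
        exact ⟨k, lt_of_le_of_lt (le_max_left _ _) hk, hkc⟩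
    rw [hTr_eq]
    refine MeasurableSet.iInter fun m => MeasurableSet.iUnion fun k =>
      MeasurableSet.iUnion fun hk => measurableSet_cutSet fun p hp => ?_
    have hn : n ≤ e.symm p := by
      by_contra hcon
      push_neg at hcon
      have hb := (hBm (e.symm p) hcon).2
      rw [e.apply_symm_apply] at hb
      have h1 : k < p.2 := hp.2
      have h2 : B < k := lt_of_le_of_lt (le_max_right m B) hk
      have h3 : p.2 ≤ |p.2| := le_abs_self _
      omega
    exact le_iSup₂ (f := fun (i : ℕ) (_ : i ≥ n) => 𝔖 i) (e.symm p) hn _ (hEmem p)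
  have htail_l : MeasurableSet[limsup 𝔖 atTop] Tl := by
    rw [limsup_eq_iInf_iSup_of_nat, measurableSet_iInf]
    intro n
    obtain ⟨B, hB0, hBm⟩ := hBbound n
    have hTl_eq : Tl = ⋂ (m : ℤ), ⋃ (k : ℤ) (_ : k < min m (-B)), cutSet E k := by
      rw [hTldef]
      ext ω
      simp only [Set.mem_iInter, Set.mem_iUnion]
      constructor
      · intro hh m
        obtain ⟨k, hk, hkc⟩ := hh (min m (-B))
        exact ⟨k, hk, hkc⟩
      · intro hh m
        obtain ⟨k, hk, hkc⟩ := hh m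
        exact ⟨k, lt_of_lt_of_le hk (min_le_left _ _), hkc⟩
    rw [hTl_eq]
    refine MeasurableSet.iInter fun m => MeasurableSet.iUnion fun k =>
      MeasurableSet.iUnion fun hk => measurableSet_cutSet fun p hp => ?_
    have hn : n ≤ e.symm p := by
      by_contra hcon
      push_neg at hcon
      have hb := (hBm (e.symm p) hcon).1
      rw [e.apply_symm_apply] at hb
      have h1 : p.1 < k := hp.1
      have h2 : k < -B := lt_of_lt_of_le hk (min_le_right m (-B))
      have h3 : -|p.1| ≤ p.1 := neg_abs_le _
      omega
    exact le_iSup₂ (f := fun (i : ℕ) (_ : i ≥ n) => 𝔖 i) (e.symm p) hn _ (hEmem p)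
  -- measurability in the ambient σ-algebra
  have hcutMeas : ∀ k : ℤ, MeasurableSet (cutSet E k) := fun k =>
    measurableSet_cutSet fun p _ => hmeas p
  have hUr_meas : ∀ m : ℤ, MeasurableSet (⋃ (k : ℤ) (_ : m < k), cutSet E k) := fun m =>
    MeasurableSet.iUnion fun k => MeasurableSet.iUnion fun _ => hcutMeas k
  have hUl_meas : ∀ m : ℤ, MeasurableSet (⋃ (k : ℤ) (_ : k < m), cutSet E k) := fun m =>
    MeasurableSet.iUnion fun k => MeasurableSet.iUnion fun _ => hcutMeas k
  -- lower bounds via continuity of measure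
  have hTr_lb : c ≤ μ Tr := by
    have hanti : Antitone (fun m : ℤ => ⋃ (k : ℤ) (_ : m < k), cutSet E k) := by
      intro m m' hmm'
      exact Set.iUnion₂_mono' fun k hk => ⟨k, lt_of_le_of_lt hmm' hk, subset_rfl⟩
    have htend := tendsto_measure_iInter_atTop (μ := μ)
      (fun m => (hUr_meas m).nullMeasurableSet) hanti ⟨0, measure_ne_top μ _⟩
    rw [hTrdef]
    refine ge_of_tendsto htend (Filter.Eventually.of_forall fun m => ?_)
    refine le_trans (hc (m+1)) (measure_mono ?_)
    show cutSet E (m+1) ⊆ ⋃ (k : ℤ) (_ : m < k), cutSet E k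
    exact Set.subset_iUnion₂ (s := fun (k : ℤ) (_ : m < k) => cutSet E k) (m+1) (lt_add_one m)
  have hTl_lb : c ≤ μ Tl := by
    have hmono : Monotone (fun m : ℤ => ⋃ (k : ℤ) (_ : k < m), cutSet E k) := by
      intro m m' hmm'
      exact Set.iUnion₂_mono' fun k hk => ⟨k, lt_of_lt_of_le hk hmm', subset_rfl⟩
    have htend := tendsto_measure_iInter_atBot (μ := μ)
      (fun m => (hUl_meas m).nullMeasurableSet) hmono ⟨0, measure_ne_top μ _⟩
    rw [hTldef]
    refine ge_of_tendsto htend (Filter.Eventually.of_forall fun m => ?_)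
    refine le_trans (hc (m-1)) (measure_mono ?_)
    show cutSet E (m-1) ⊆ ⋃ (k : ℤ) (_ : k < m), cutSet E k
    exact Set.subset_iUnion₂ (s := fun (k : ℤ) (_ : k < m) => cutSet E k) (m-1) (sub_one_lt m)
  -- Kolmogorov 0-1 law
  have hTr1 : μ Tr = 1 := by
    rcases measure_zero_or_one_of_measurableSet_limsup_atTop h_le h_indep htail_r with h0 | h1
    · exact absurd (le_antisymm (h0 ▸ hTr_lb) (zero_le : (0:ℝ≥0∞) ≤ c)) hc0
    · exact h1
  have hTl1 : μ Tl = 1 := by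
    rcases measure_zero_or_one_of_measurableSet_limsup_atTop h_le h_indep htail_l with h0 | h1
    · exact absurd (le_antisymm (h0 ▸ hTl_lb) (zero_le : (0:ℝ≥0∞) ≤ c)) hc0
    · exact h1
  have hTr_meas : MeasurableSet Tr := MeasurableSet.iInter fun m => hUr_meas m
  have hTl_meas : MeasurableSet Tl := MeasurableSet.iInter fun m => hUl_meas m
  have haer : ∀ᵐ ω ∂μ, ω ∈ Tr := by
    rw [ae_iff]
    have : {ω | ¬ ω ∈ Tr} = Trᶜ := rfl
    rw [this, prob_compl_eq_zero_iff hTr_meas]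
    exact hTr1
  have hael : ∀ᵐ ω ∂μ, ω ∈ Tl := by
    rw [ae_iff]
    have : {ω | ¬ ω ∈ Tl} = Tlᶜ := rfl
    rw [this, prob_compl_eq_zero_iff hTl_meas]
    exact hTl1
  filter_upwards [haer, hael] with ω hr hl
  intro m
  constructor
  · obtain ⟨k, hk, hkc⟩ := Set.mem_iUnion₂.1 (Set.mem_iInter.1 hr m)
    exact ⟨k, hk, mem_cutSet.1 hkc⟩
  · obtain ⟨k, hk, hkc⟩ := Set.mem_iUnion₂.1 (Set.mem_iInter.1 hl m)
    exact ⟨k, hk, mem_cutSet.1 hkc⟩
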